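/- Let X be a finite set with probability measure μ_X, Ω_X a finite set of kernels on X with probability measure ν_X, and let t be a fixed kernel. Define the empirical measure ν_N = (1/N)Σ δ_{t_i} from i.i.d. samples t_i ~ ν_X. For the parameterized GW distance between the empirical pm-net X_{T_N} and the one-parameter pm-net X_t with cost structure from general parameter spaces and p∈[1,∞], q∈[1,∞), GW_C(X_{T_N}, X_t) = inf_{π∈C(μ_X,μ_X)} ( (1/N) Σ_{i=1}^N dis_p(π, t_i, t)^q )^{1/q}, and GW_C(X_{T_N}, X_t) → GW_C(X, X_t) almost surely as N→∞, where GW_C(X, X_t) = inf_π E_{ν_X}[dis_p(π, ·, t)^q]^{1/q}. -/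

import Mathlib

open Finset MeasureTheory

/-- Coupling predicate for finite probability vectors. -/
def IsCoupling {X Y : Type*} [Fintype X] [Fintype Y]
    (μX : X → ℝ) (μY : Y → ℝ) (π : X → Y → ℝ) : Prop :=
  (∀ x y, 0 ≤ π x y) ∧ (∀ x, ∑ y, π x y = μX x) ∧ (∀ y, ∑ x, π x y = μY y)

/-- The `p`-distortion of a coupling with respect to two kernels. -/
noncomputable def dis {X Y : Type*} [Fintype X] [Fintype Y]
    (p : ℝ) (π : X → Y → ℝ) (f : X → X → ℝ) (g : Y → Y → ℝ) : ℝ :=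
  (∑ x, ∑ y, ∑ x', ∑ y', |f x x' - g y y'| ^ p * (π x y * π x' y')) ^ (1 / p)

lemma dis_nonneg {X Y : Type*} [Fintype X] [Fintype Y]
    (p : ℝ) (π : X → Y → ℝ) (hπ : ∀ x y, 0 ≤ π x y) (f : X → X → ℝ) (g : Y → Y → ℝ) :
    0 ≤ dis p π f g := by
  apply Real.rpow_nonneg
  refine Finset.sum_nonneg fun x _ => Finset.sum_nonneg fun y _ =>
    Finset.sum_nonneg fun x' _ => Finset.sum_nonneg fun y' _ => ?_
  exact mul_nonneg (Real.rpow_nonneg (abs_nonneg _) _)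
    (mul_nonneg (hπ x y) (hπ x' y'))

/-- uniform bound on the distortion over couplings -/
lemma dis_le {X : Type*} [Fintype X]
    (μX : X → ℝ) (hμX0 : ∀ x, 0 ≤ μX x) (hμX1 : ∑ x, μX x = 1)
    (p : ℝ) (hp : 0 ≤ 1 / p) (π : X → X → ℝ) (hπ : IsCoupling μX μX π)
    (f : X → X → ℝ) (g : X → X → ℝ) :
    dis p π f g ≤ (∑ x, ∑ y, ∑ x', ∑ y', |f x x' - g y y'| ^ p) ^ (1 / p) := by
  obtain ⟨h0, h1, h2⟩ := hπ
  have hπle : ∀ x y, π x y * 1 ≤ 1 := by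
    intro x y
    rw [mul_one]
    calc π x y ≤ ∑ y', π x y' := Finset.single_le_sum (fun y' _ => h0 x y') (mem_univ y)
    _ = μX x := h1 x
    _ ≤ ∑ x', μX x' := Finset.single_le_sum (fun x' _ => hμX0 x') (mem_univ x)
    _ = 1 := hμX1
  apply Real.rpow_le_rpow
  · refine Finset.sum_nonneg fun x _ => Finset.sum_nonneg fun y _ =>
      Finset.sum_nonneg fun x' _ => Finset.sum_nonneg fun y' _ => ?_
    exact mul_nonneg (Real.rpow_nonneg (abs_nonneg _) _)
      (mul_nonneg (h0 x y) (h0 x' y'))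
  · refine Finset.sum_le_sum fun x _ => Finset.sum_le_sum fun y _ =>
      Finset.sum_le_sum fun x' _ => Finset.sum_le_sum fun y' _ => ?_
    have hb : 0 ≤ |f x x' - g y y'| ^ p := Real.rpow_nonneg (abs_nonneg _) _
    calc |f x x' - g y y'| ^ p * (π x y * π x' y')
        ≤ |f x x' - g y y'| ^ p * 1 := by
          apply mul_le_mul_of_nonneg_left _ hb
          calc π x y * π x' y' ≤ 1 * 1 := by
                apply mul_le_mul _ _ (h0 x' y') zero_le_one
                · simpa using hπle x y
                · simpa using hπle x' y'
          _ = 1 := one_mul 1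
      _ = |f x x' - g y y'| ^ p := mul_one _
  · exact hp

/-- For a random measure network model sampled i.i.d. from a distribution `ν` on a finite
set of kernels: (1) the parameterized GW distance between the empirical pm-net `X_{T_N}`
and the one-parameter pm-net `X_t` reduces to an infimum over couplings of the underlying
measure of the empirical average of distortions (since the coupling of parameter measures
with a point mass is unique), and (2) this empirical quantity converges almost surely to
the parameterized GW distance between the model `X` and `X_t` as `N → ∞`. -/
theorem empiricalGW_one_point_convergence {X : Type*} [Fintype X]
    (μX : X → ℝ) (hμX0 : ∀ x, 0 ≤ μX x) (hμX1 : ∑ x, μX x = 1)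
    {Ω : Type*} [Fintype Ω] [MeasurableSpace Ω] [MeasurableSingletonClass Ω]
    (ω : Ω → X → X → ℝ) (t : X → X → ℝ)
    (ν : Measure Ω) [IsProbabilityMeasure ν]
    {Θ : Type*} [mΘ : MeasurableSpace Θ] (P : Measure Θ) [IsProbabilityMeasure P]
    (U : ℕ → Θ → Ω) (hmeas : ∀ n, Measurable (U n))
    (hindep : ProbabilityTheory.iIndepFun U P)
    (hdist : ∀ n, P.map (U n) = ν)
    (p q : ℝ) (hp : 1 ≤ p) (hq : 1 ≤ q) :
    (∀ N : ℕ, 0 < N → ∀ ks : Fin N → Ω,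
      sInf {r : ℝ | ∃ (π : X → X → ℝ) (ξ : Fin N → ℝ), IsCoupling μX μX π ∧
          (∀ i, 0 ≤ ξ i) ∧ (∀ i, ξ i = (1 : ℝ) / N) ∧ (∑ i, ξ i = 1) ∧
          r = (∑ i, dis p π (ω (ks i)) t ^ q * ξ i) ^ (1 / q)}
        = sInf {r : ℝ | ∃ π : X → X → ℝ, IsCoupling μX μX π ∧
          r = ((1 / N : ℝ) * ∑ i : Fin N, dis p π (ω (ks i)) t ^ q) ^ (1 / q)}) ∧
    (∀ᵐ θ ∂P, Filter.Tendsto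
      (fun N : ℕ => sInf {r : ℝ | ∃ π : X → X → ℝ, IsCoupling μX μX π ∧
        r = ((1 / N : ℝ) * ∑ i : Fin N, dis p π (ω (U i θ)) t ^ q) ^ (1 / q)})
      Filter.atTop
      (nhds (sInf {r : ℝ | ∃ π : X → X → ℝ, IsCoupling μX μX π ∧
        r = (∑ s : Ω, (ν {s}).toReal * dis p π (ω s) t ^ q) ^ (1 / q)}))) := by
  classical
  have hp0 : (0:ℝ) < p := lt_of_lt_of_le one_pos hp
  have hq0 : (0:ℝ) < q := lt_of_lt_of_le one_pos hq
  have hq0' : (0:ℝ) ≤ q := le_of_lt hq0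
  have hiq0 : (0:ℝ) ≤ 1 / q := by positivity
  -- part 1
  constructor
  · intro N hN ks
    congr 1
    ext r
    simp only [Set.mem_setOf_eq]
    constructor
    · rintro ⟨π, ξ, hc, -, hξ, -, rfl⟩
      refine ⟨π, hc, ?_⟩
      congr 1
      simp only [hξ]
      rw [← Finset.sum_mul, mul_comm]
    · rintro ⟨π, hc, rfl⟩
      refine ⟨π, fun _ => 1 / N, hc, fun i => by positivity, fun i => rfl, ?_, ?_⟩
      · rw [Finset.sum_const, Finset.card_univ, Fintype.card_fin, nsmul_eq_mul,
          mul_one_div, div_self (Nat.cast_ne_zero.2 hN.ne')]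
      · congr 1
        rw [← Finset.sum_mul, mul_comm]
  -- part 2
  · set K : Set (X → X → ℝ) := {π | IsCoupling μX μX π} with hK
    have hKne : K.Nonempty := by
      refine ⟨fun x y => μX x * μX y, fun x y => mul_nonneg (hμX0 x) (hμX0 y), ?_, ?_⟩
      · intro x; rw [← Finset.mul_sum, hμX1, mul_one]
      · intro y; rw [← Finset.sum_mul, hμX1, one_mul]
    set d : Ω → (X → X → ℝ) → ℝ := fun s π => dis p π (ω s) t ^ q with hd
    set M : Ω → ℝ := fun s =>
      ((∑ x, ∑ y, ∑ x', ∑ y', |ω s x x' - t y y'| ^ p) ^ (1 / p)) ^ q with hM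
    have hd0 : ∀ s, ∀ π ∈ K, 0 ≤ d s π := fun s π hπ =>
      Real.rpow_nonneg (dis_nonneg p π hπ.1 (ω s) t) q
    have hdM : ∀ s, ∀ π ∈ K, d s π ≤ M s := by
      intro s π hπ
      exact Real.rpow_le_rpow (dis_nonneg p π hπ.1 (ω s) t)
        (dis_le μX hμX0 hμX1 p (by positivity) π hπ (ω s) t) hq0'
    set GN : ℕ → Θ → (X → X → ℝ) → ℝ :=
      fun N θ π => (1 / N : ℝ) * ∑ i : Fin N, d (U i θ) π with hGN
    set G : (X → X → ℝ) → ℝ := fun π => ∑ s : Ω, (ν {s}).toReal * d s π with hG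
    set ind : Ω → Ω → ℝ := fun s u => if u = s then 1 else 0 with hind
    have hindmeas : ∀ s, Measurable (ind s) := fun s => measurable_of_countable _
    -- strong law of large numbers for each indicator
    have hslln : ∀ s : Ω, ∀ᵐ θ ∂P, Filter.Tendsto
        (fun N : ℕ => (∑ i ∈ range N, ind s (U i θ)) / N) Filter.atTop
        (nhds ((ν {s}).toReal)) := by
      intro s
      have hInt : Integrable (fun θ => ind s (U 0 θ)) P := by
        have : (fun θ => ind s (U 0 θ)) = Set.indicator ((U 0) ⁻¹' {s}) (fun _ => 1) := by
          funext θ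
          simp [hind, Set.indicator, Set.mem_preimage]
        rw [this]
        exact (integrable_const (1:ℝ)).indicator (hmeas 0 (measurableSet_singleton s))
      have hIndep : Pairwise (Function.onFun (ProbabilityTheory.IndepFun · · P)
          (fun i θ => ind s (U i θ))) := by
        intro i j hij
        exact (hindep.indepFun hij).comp (hindmeas s) (hindmeas s)
      have hIdent : ∀ i, ProbabilityTheory.IdentDistrib
          (fun θ => ind s (U i θ)) (fun θ => ind s (U 0 θ)) P P := by
        intro i
        have : ProbabilityTheory.IdentDistrib (U i) (U 0) P P :=
          ⟨(hmeas i).aemeasurable, (hmeas 0).aemeasurable, by rw [hdist i, hdist 0]⟩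
        exact this.comp (hindmeas s)
      have hE : (∫ θ, ind s (U 0 θ) ∂P) = (ν {s}).toReal := by
        rw [← integral_map (hmeas 0).aemeasurable
          ((hindmeas s).aestronglyMeasurable), hdist 0]
        have h2 : ∀ u, ind s u = Set.indicator {s} (fun _ => (1:ℝ)) u := by
          intro u; simp [hind, Set.indicator]
        simp_rw [h2]
        exact integral_indicator_one (μ := ν) (measurableSet_singleton s)
      rw [← hE]
      exact ProbabilityTheory.strong_law_ae_real (fun i θ => ind s (U i θ))
        hInt hIndep hIdent
    have hfreq : ∀ᵐ θ ∂P, ∀ s : Ω, Filter.Tendsto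
        (fun N : ℕ => (∑ i ∈ range N, ind s (U i θ)) / N) Filter.atTop
        (nhds ((ν {s}).toReal)) := ae_all_iff.2 hslln
    filter_upwards [hfreq] with θ hθ
    -- frequencies
    set c : ℕ → Ω → ℝ := fun N s => (∑ i ∈ range N, ind s (U i θ)) / N with hc
    -- key identity
    have hkey : ∀ N π, GN N θ π = ∑ s : Ω, c N s * d s π := by
      intro N π
      have h1 : ∀ u : Ω, d u π = ∑ s : Ω, ind s u * d s π := by
        intro u
        simp [hind, ite_mul, Finset.sum_ite_eq']
      calc GN N θ π = (1 / N : ℝ) * ∑ i ∈ range N, d (U i θ) π := by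
            simp only [hGN]
            congr 1
            exact Fin.sum_univ_eq_sum_range (fun i => d (U i θ) π) N
        _ = (1 / N : ℝ) * ∑ i ∈ range N, ∑ s : Ω, ind s (U i θ) * d s π := by
            simp_rw [← h1]
        _ = (1 / N : ℝ) * ∑ s : Ω, (∑ i ∈ range N, ind s (U i θ)) * d s π := by
            rw [Finset.sum_comm]
            simp_rw [Finset.sum_mul]
        _ = ∑ s : Ω, c N s * d s π := by
            rw [Finset.mul_sum]
            congr 1; funext s
            rw [hc]; ring
    -- the error term
    set ε : ℕ → ℝ := fun N => ∑ s : Ω, |c N s - (ν {s}).toReal| * M s with hε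
    have hεtendsto : Filter.Tendsto ε Filter.atTop (nhds 0) := by
      have : Filter.Tendsto (fun N => ∑ s : Ω, |c N s - (ν {s}).toReal| * M s)
          Filter.atTop (nhds (∑ s : Ω, (0:ℝ))) := by
        apply tendsto_finset_sum
        intro s _
        have h1 : Filter.Tendsto (fun N => c N s - (ν {s}).toReal)
            Filter.atTop (nhds 0) := by
          have h := (hθ s).sub_const ((ν {s}).toReal)
          rw [sub_self] at h
          exact h
        have h2 : Filter.Tendsto (fun N => |c N s - (ν {s}).toReal|)
            Filter.atTop (nhds 0) := by
          simpa using h1.abs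
        simpa using h2.mul_const (M s)
      simpa using this
    -- uniform estimate
    have hest : ∀ N, ∀ π ∈ K, |GN N θ π - G π| ≤ ε N := by
      intro N π hπ
      rw [hkey N π, hG]
      have : (∑ s : Ω, c N s * d s π) - (∑ s : Ω, (ν {s}).toReal * d s π)
          = ∑ s : Ω, (c N s - (ν {s}).toReal) * d s π := by
        rw [← Finset.sum_sub_distrib]
        congr 1; funext s; ring
      rw [this]
      calc |∑ s : Ω, (c N s - (ν {s}).toReal) * d s π|
          ≤ ∑ s : Ω, |(c N s - (ν {s}).toReal) * d s π| := Finset.abs_sum_le_sum_abs _ _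
        _ ≤ ε N := by
            apply Finset.sum_le_sum
            intro s _
            rw [abs_mul, abs_of_nonneg (hd0 s π hπ)]
            exact mul_le_mul_of_nonneg_left (hdM s π hπ) (abs_nonneg _)
    -- nonnegativity
    have hGN0 : ∀ N, ∀ π ∈ K, 0 ≤ GN N θ π := by
      intro N π hπ
      apply mul_nonneg (by positivity)
      exact Finset.sum_nonneg fun i _ => hd0 _ π hπ
    have hG0 : ∀ π ∈ K, 0 ≤ G π := by
      intro π hπ
      exact Finset.sum_nonneg fun s _ => mul_nonneg ENNReal.toReal_nonneg (hd0 s π hπ)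
    -- infima of G and GN
    set b : ℝ := sInf (G '' K) with hb
    set bN : ℕ → ℝ := fun N => sInf (GN N θ '' K) with hbN
    have hGKne : (G '' K).Nonempty := hKne.image G
    have hGNKne : ∀ N, (GN N θ '' K).Nonempty := fun N => hKne.image (GN N θ)
    have hGbdd : BddBelow (G '' K) := by
      refine ⟨0, ?_⟩
      rintro r ⟨π, hπ, rfl⟩
      exact hG0 π hπ
    have hGNbdd : ∀ N, BddBelow (GN N θ '' K) := by
      intro N
      refine ⟨0, ?_⟩
      rintro r ⟨π, hπ, rfl⟩
      exact hGN0 N π hπ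
    have hbdist : ∀ N, |bN N - b| ≤ ε N := by
      intro N
      have h1 : bN N - ε N ≤ b := by
        apply le_csInf hGKne
        rintro r ⟨π, hπ, rfl⟩
        have h3 : bN N ≤ GN N θ π := csInf_le (hGNbdd N) ⟨π, hπ, rfl⟩
        have h4 := hest N π hπ
        rw [abs_sub_le_iff] at h4
        linarith [h4.1]
      have h2 : b - ε N ≤ bN N := by
        apply le_csInf (hGNKne N)
        rintro r ⟨π, hπ, rfl⟩
        have h3 : b ≤ G π := csInf_le hGbdd ⟨π, hπ, rfl⟩
        have h4 := hest N π hπ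
        rw [abs_sub_le_iff] at h4
        linarith [h4.2]
      rw [abs_sub_le_iff]
      constructor <;> linarith
    have hbtendsto : Filter.Tendsto bN Filter.atTop (nhds b) := by
      rw [tendsto_iff_dist_tendsto_zero]
      apply squeeze_zero (fun N => dist_nonneg) (fun N => ?_) hεtendsto
      rw [Real.dist_eq]
      exact hbdist N
    -- the monotone continuous map x ↦ (max x 0) ^ (1/q)
    set F : ℝ → ℝ := fun x => (max x 0) ^ (1 / q) with hF
    have hFmono : Monotone F := by
      intro a a' haa'
      exact Real.rpow_le_rpow (le_max_right a 0) (max_le_max haa' le_rfl) hiq0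
    have hFcont : Continuous F := by
      have h1 : Continuous (fun y : ℝ => y ^ (1 / q)) :=
        continuous_iff_continuousAt.2 fun y =>
          Real.continuousAt_rpow_const y (1 / q) (Or.inr hiq0)
      exact h1.comp (continuous_id.max continuous_const)
    have hFval : ∀ x : ℝ, 0 ≤ x → F x = x ^ (1 / q) := by
      intro x hx
      rw [hF]; simp [max_eq_left hx]
    -- identifying the sets in the statement
    have hsetN : ∀ N : ℕ,
        {r : ℝ | ∃ π : X → X → ℝ, IsCoupling μX μX π ∧
          r = ((1 / N : ℝ) * ∑ i : Fin N, dis p π (ω (U i θ)) t ^ q) ^ (1 / q)}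
        = F '' (GN N θ '' K) := by
      intro N
      ext r
      simp only [Set.mem_setOf_eq, Set.mem_image]
      constructor
      · rintro ⟨π, hπ, rfl⟩
        exact ⟨GN N θ π, ⟨π, hπ, rfl⟩, hFval _ (hGN0 N π hπ)⟩
      · rintro ⟨x, ⟨π, hπ, rfl⟩, rfl⟩
        exact ⟨π, hπ, hFval _ (hGN0 N π hπ)⟩
    have hset : {r : ℝ | ∃ π : X → X → ℝ, IsCoupling μX μX π ∧
          r = (∑ s : Ω, (ν {s}).toReal * dis p π (ω s) t ^ q) ^ (1 / q)}
        = F '' (G '' K) := by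
      ext r
      simp only [Set.mem_setOf_eq, Set.mem_image]
      constructor
      · rintro ⟨π, hπ, rfl⟩
        exact ⟨G π, ⟨π, hπ, rfl⟩, hFval _ (hG0 π hπ)⟩
      · rintro ⟨x, ⟨π, hπ, rfl⟩, rfl⟩
        exact ⟨π, hπ, hFval _ (hG0 π hπ)⟩
    have hInfN : ∀ N : ℕ, sInf (F '' (GN N θ '' K)) = F (bN N) := by
      intro N
      exact (hFmono.map_csInf_of_continuousAt (hFcont.continuousAt)
        (hGNKne N) (hGNbdd N)).symm
    have hInf : sInf (F '' (G '' K)) = F b :=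
      (hFmono.map_csInf_of_continuousAt (hFcont.continuousAt) hGKne hGbdd).symm
    simp only [hsetN, hset, hInfN, hInf]
    exact (hFcont.continuousAt.tendsto.comp hbtendsto)
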